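/- Let s ≥ 3 and α ∈ ℚ, and let φ(ρ) = ∑_{j≥0} a_j ρ^{j+1} be the compositional inverse of the polynomial ρ(φ) = φ - α φ^{s-1} (as formal power series, with a_0 = 1). Then a_k = 0 unless k is a multiple of (s-2), and a_{j(s-2)} = α^j · F_j(s-1, 1) for all j ≥ 0, where F_j(s-1,1) = (1/(j(s-1)+1))·binom(j(s-1)+1, j) is a Fuss-Catalan number. -/

import Mathlib

open Finset PowerSeries

/-- Composition `f ∘ g` of formal power series; this is the correct notion of
composition when `g` has zero constant coefficient (then `coeff n (g ^ k) = 0` for `k > n`). -/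
noncomputable def compPS {R : Type*} [CommRing R] (f g : PowerSeries R) : PowerSeries R :=
  PowerSeries.mk fun n =>
    ∑ k ∈ Finset.range (n + 1), (PowerSeries.coeff (R := R) k f) * (PowerSeries.coeff (R := R) n (g ^ k))

/-- The Fuss–Catalan numbers `F_j(p, k) = (k/(pj+k))·C(pj+k, j)`, as rationals. -/
noncomputable def Fc (p k j : ℕ) : ℚ := (k : ℚ) / (p * j + k) * ((p * j + k).choose j)

lemma Fc_zero_left (p j : ℕ) : Fc p 0 j = 0 := by simp [Fc]

lemma Fc_zero_right (p k : ℕ) (hk : 1 ≤ k) : Fc p k 0 = 1 := by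
  have : ((k : ℚ)) ≠ 0 := by positivity
  simp [Fc, div_mul_eq_mul_div, this]

/-- The expected coefficient of `X^m` in `φ^k`. -/
noncomputable def Tc (α : ℚ) (p k m : ℕ) : ℚ :=
  if k ≤ m ∧ (p - 1) ∣ (m - k) then α ^ ((m - k) / (p - 1)) * Fc p k ((m - k) / (p - 1)) else 0

lemma Tc_zero (α : ℚ) (p k m : ℕ) (h : ¬(k ≤ m ∧ (p - 1) ∣ (m - k))) : Tc α p k m = 0 :=
  if_neg h

lemma Tc_eval (α : ℚ) (p k j : ℕ) (hp : 2 ≤ p) :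
    Tc α p k (k + j * (p - 1)) = α ^ j * Fc p k j := by
  have hq : 0 < p - 1 := by omega
  have hd : (k + j * (p - 1)) - k = j * (p - 1) := by omega
  rw [Tc, if_pos ⟨Nat.le_add_right _ _, by rw [hd]; exact dvd_mul_left _ _⟩, hd,
    Nat.mul_div_cancel j hq]

/-- The Pascal-type recurrence of Fuss–Catalan numbers. -/
lemma Fid (p k j : ℕ) (hp : 2 ≤ p) (hj : 1 ≤ j) :
    Fc p (k + 1) j = Fc p k j + Fc p (k + p) (j - 1) := by
  obtain ⟨j', rfl⟩ : ∃ j', j = j' + 1 := ⟨j - 1, by omega⟩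
  unfold Fc
  have e1 : p * (j' + 1) + (k + 1) = (p * (j' + 1) + k) + 1 := by ring
  have e2 : p * (j' + 1 - 1) + (k + p) = p * (j' + 1) + k := by
    simp only [Nat.add_sub_cancel]; ring
  rw [e1, e2, Nat.add_sub_cancel]
  have hn2 : 2 * (j' + 1) ≤ p * (j' + 1) + k := by
    have := Nat.mul_le_mul_right (j' + 1) hp; omega
  have hPascal : (((p * (j' + 1) + k + 1)).choose (j' + 1) : ℚ)
      = ((p * (j' + 1) + k).choose (j' + 1) : ℚ) + ((p * (j' + 1) + k).choose j' : ℚ) := by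
    have := Nat.choose_succ_succ (p * (j' + 1) + k) j'
    push_cast [this]; ring
  have hrel : ((j' : ℚ) + 1) * ((p * (j' + 1) + k).choose (j' + 1) : ℚ)
      = ((p : ℚ) * (j' + 1) + k - j') * ((p * (j' + 1) + k).choose j' : ℚ) := by
    have h := Nat.choose_succ_right_eq (p * (j' + 1) + k) j'
    have hj'n : j' ≤ p * (j' + 1) + k := by omega
    have h2 := congrArg (fun x : ℕ => (x : ℚ)) h
    push_cast [Nat.cast_sub hj'n] at h2
    linarith [h2]
  set C1 : ℚ := ((p * (j' + 1) + k).choose (j' + 1) : ℚ) with hC1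
  set C2 : ℚ := ((p * (j' + 1) + k).choose j' : ℚ) with hC2
  rw [hPascal]
  have hd1 : ((p : ℚ) * (j' + 1) + (k + 1)) ≠ 0 := by positivity
  have hd2 : ((p : ℚ) * (j' + 1) + k) ≠ 0 := by
    have : (2 : ℚ) * (j' + 1) ≤ (p : ℚ) * (j' + 1) + k := by exact_mod_cast hn2
    nlinarith [Nat.cast_nonneg (α := ℚ) j', Nat.cast_nonneg (α := ℚ) k]
  have hd3 : ((p : ℚ) * (j' : ℚ) + ((k : ℚ) + p)) ≠ 0 := by
    have : ((p : ℚ) * (j' : ℚ) + ((k : ℚ) + p)) = (p : ℚ) * (j' + 1) + k := by ring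
    rw [this]; exact hd2
  push_cast
  field_simp
  ring_nf
  ring_nf at hrel
  linear_combination ((p : ℚ) * ((p : ℚ) * (j' + 1) + k)) * hrel

/-- The key step identity for the induction. -/
lemma Tkey (α : ℚ) (p : ℕ) (hp : 2 ≤ p) (k m : ℕ) (hkm : k ≤ m) :
    Tc α p (k + 1) (m + 1)
      = (if k = 0 then (if m = 0 then (1 : ℚ) else 0) else Tc α p k m)
        + α * Tc α p (k + p) (m + 1) := by
  have hq : 0 < p - 1 := by omega
  by_cases hdvd : (p - 1) ∣ (m - k)
  · obtain ⟨j, hj⟩ := hdvd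
    rw [Nat.mul_comm] at hj
    obtain rfl : m = k + j * (p - 1) := by omega
    rcases Nat.eq_zero_or_pos j with rfl | hjpos
    · simp only [Nat.zero_mul, Nat.add_zero] at *
      have h1 : Tc α p (k + 1) (k + 1) = 1 := by
        have := Tc_eval α p (k + 1) 0 hp
        simpa [Fc_zero_right p (k + 1) (by omega)] using this
      have h2 : Tc α p (k + p) (k + 1) = 0 := Tc_zero _ _ _ _ (by omega)
      rw [h1, h2]
      rcases Nat.eq_zero_or_pos k with rfl | hkpos
      · simp
      · have h3 : Tc α p k k = 1 := by
          have := Tc_eval α p k 0 hp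
          simpa [Fc_zero_right p k hkpos] using this
        rw [if_neg (by omega : ¬ k = 0), h3]; ring
    · obtain ⟨j', rfl⟩ : ∃ j', j = j' + 1 := ⟨j - 1, by omega⟩
      have hmul : (j' + 1) * (p - 1) = j' * (p - 1) + (p - 1) := by ring
      have hmpos : 0 < (j' + 1) * (p - 1) := by omega
      have e1 : k + (j' + 1) * (p - 1) + 1 = (k + 1) + (j' + 1) * (p - 1) := by omega
      have e2 : k + (j' + 1) * (p - 1) + 1 = (k + p) + j' * (p - 1) := by omega
      have L : Tc α p (k + 1) (k + (j' + 1) * (p - 1) + 1)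
          = α ^ (j' + 1) * Fc p (k + 1) (j' + 1) := by
        rw [e1]; exact Tc_eval α p (k + 1) (j' + 1) hp
      have R2 : Tc α p (k + p) (k + (j' + 1) * (p - 1) + 1) = α ^ j' * Fc p (k + p) j' := by
        rw [e2]; exact Tc_eval α p (k + p) j' hp
      have R1 : (if k = 0 then (if k + (j' + 1) * (p - 1) = 0 then (1 : ℚ) else 0)
            else Tc α p k (k + (j' + 1) * (p - 1)))
          = α ^ (j' + 1) * Fc p k (j' + 1) := by
        rcases Nat.eq_zero_or_pos k with rfl | hkpos
        · rw [if_pos rfl, if_neg (by omega), Fc_zero_left]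
          ring
        · rw [if_neg (by omega : ¬ k = 0), Tc_eval α p k (j' + 1) hp]
      rw [L, R1, R2]
      have hFid := Fid p k (j' + 1) hp (by omega)
      rw [Nat.add_sub_cancel] at hFid
      rw [hFid]
      ring
  · have L : Tc α p (k + 1) (m + 1) = 0 := by
      apply Tc_zero
      rintro ⟨-, hd⟩
      exact hdvd ((by omega : m + 1 - (k + 1) = m - k) ▸ hd)
    have R1 : (if k = 0 then (if m = 0 then (1 : ℚ) else 0) else Tc α p k m) = 0 := by
      rcases Nat.eq_zero_or_pos k with rfl | hkpos
      · rw [if_pos rfl, if_neg]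
        intro h; subst h; exact hdvd (by simp)
      · rw [if_neg (by omega : ¬ k = 0)]
        exact Tc_zero _ _ _ _ (by rintro ⟨-, hd⟩; exact hdvd hd)
    have R2 : Tc α p (k + p) (m + 1) = 0 := by
      apply Tc_zero
      rintro ⟨hle, hd⟩
      apply hdvd
      obtain ⟨t, ht⟩ := hd
      have hmul : (p - 1) * (t + 1) = (p - 1) * t + (p - 1) := by ring
      exact ⟨t + 1, by omega⟩
    rw [L, R1, R2]; ring

/-- let `s ≥ 3`, `α ∈ ℚ`, and let `φ(ρ) = ∑_(j≥0) a_j ρ^(j+1)` (with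
`a₀ = 1`) be the compositional inverse of `ρ(φ) = φ - α φ^(s-1)`. Then `a_k = 0`
unless `(s-2) ∣ k`, and `a_(j(s-2)) = α^j · F_j(s-1, 1)` where
`F_j(s-1,1) = (1/(j(s-1)+1)) · C(j(s-1)+1, j)` are Fuss-Catalan numbers. -/
theorem adiabatic_coefficients (s : ℕ) (hs : 3 ≤ s) (α : ℚ) (φ : PowerSeries ℚ)
    (hφ0 : constantCoeff (R := ℚ) φ = 0) (hφ1 : coeff (R := ℚ) 1 φ = 1)
    (hinv : compPS (X - PowerSeries.C (R := ℚ) α * X ^ (s - 1)) φ = X)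
    (hinv' : compPS φ (X - PowerSeries.C (R := ℚ) α * X ^ (s - 1)) = X) :
    (∀ k : ℕ, ¬ (s - 2) ∣ k → coeff (R := ℚ) (k + 1) φ = 0) ∧
    (∀ j : ℕ, coeff (R := ℚ) (j * (s - 2) + 1) φ
        = α ^ j * ((1 / (j * (s - 1) + 1) : ℚ) * ((j * (s - 1) + 1).choose j : ℚ))) := by
  have hp : 2 ≤ s - 1 := by omega
  have hpow0 : ∀ k m : ℕ, m < k → coeff (R := ℚ) m (φ ^ k) = 0 := by
    intro k m h
    have hdvd : (X : ℚ⟦X⟧) ^ k ∣ φ ^ k :=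
      pow_dvd_pow_of_dvd (PowerSeries.X_dvd_iff.mpr hφ0) k
    exact (PowerSeries.X_pow_dvd_iff.mp hdvd) m h
  -- functional equation
  have hX : φ = X + PowerSeries.C (R := ℚ) α * φ ^ (s - 1) := by
    have hc : compPS (X - PowerSeries.C (R := ℚ) α * X ^ (s - 1)) φ
        = φ - PowerSeries.C (R := ℚ) α * φ ^ (s - 1) := by
      ext n
      simp only [compPS, coeff_mk, map_sub, PowerSeries.coeff_X, PowerSeries.coeff_C_mul,
        PowerSeries.coeff_X_pow]
      have hterm : ∀ k, ((if k = 1 then (1 : ℚ) else 0) - α * (if k = s - 1 then (1:ℚ) else 0))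
            * (coeff (R := ℚ) n (φ ^ k))
          = (if k = 1 then coeff (R := ℚ) n (φ ^ k) else 0)
            - (if k = s - 1 then α * coeff (R := ℚ) n (φ ^ k) else 0) := by
        intro k; split_ifs <;> ring
      rw [Finset.sum_congr rfl (fun k _ => hterm k), Finset.sum_sub_distrib,
        Finset.sum_ite_eq' (Finset.range (n + 1)) 1,
        Finset.sum_ite_eq' (Finset.range (n + 1)) (s - 1)]
      simp only [Finset.mem_range, pow_one]
      split_ifs with h1 h2 h2
      · rfl
      · rw [hpow0 (s - 1) n (by omega)]; ring
      · omega
      · have hn0 : n = 0 := by omega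
        subst hn0
        rw [hpow0 (s - 1) 0 (by omega), PowerSeries.coeff_zero_eq_constantCoeff, hφ0]; ring
    rw [hc] at hinv
    rw [← hinv]; ring
  -- coefficient recurrence
  have hrec : ∀ k m : ℕ, coeff (R := ℚ) (m + 1) (φ ^ (k + 1))
      = coeff (R := ℚ) m (φ ^ k) + α * coeff (R := ℚ) (m + 1) (φ ^ (k + (s - 1))) := by
    intro k m
    have hsplit : φ ^ (k + 1) = φ ^ k * X + PowerSeries.C (R := ℚ) α * φ ^ (k + (s - 1)) := by
      calc φ ^ (k + 1) = φ ^ k * φ := pow_succ φ k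
        _ = φ ^ k * (X + PowerSeries.C (R := ℚ) α * φ ^ (s - 1)) := by rw [← hX]
        _ = φ ^ k * X + PowerSeries.C (R := ℚ) α * φ ^ (k + (s - 1)) := by rw [pow_add]; ring
    rw [hsplit, map_add, PowerSeries.coeff_succ_mul_X, PowerSeries.coeff_C_mul]
  -- main induction
  have main : ∀ m : ℕ, ∀ n k : ℕ, 1 ≤ k → m < k + n →
      coeff (R := ℚ) m (φ ^ k) = Tc α (s - 1) k m := by
    intro m
    induction m using Nat.strong_induction_on with
    | _ m ihm =>
      intro n
      induction n with
      | zero =>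
        intro k hk hlt
        rw [hpow0 k m (by omega), Tc_zero _ _ _ _ (by omega)]
      | succ n ihn =>
        intro k hk hlt
        rcases lt_or_ge m k with h | h
        · rw [hpow0 k m h, Tc_zero _ _ _ _ (by omega)]
        · obtain ⟨k', rfl⟩ : ∃ k', k = k' + 1 := ⟨k - 1, by omega⟩
          obtain ⟨m', rfl⟩ : ∃ m', m = m' + 1 := ⟨m - 1, by omega⟩
          rw [hrec k' m']
          have h2 : coeff (R := ℚ) (m' + 1) (φ ^ (k' + (s - 1))) = Tc α (s - 1) (k' + (s - 1)) (m' + 1) :=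
            ihn (k' + (s - 1)) (by omega) (by omega)
          rw [h2, Tkey α (s - 1) hp k' m' (by omega)]
          congr 1
          rcases Nat.eq_zero_or_pos k' with rfl | hk'
          · rw [if_pos rfl, pow_zero, PowerSeries.coeff_one]
          · rw [if_neg (by omega : ¬ k' = 0)]
            exact ihm m' (by omega) (m' + 1) k' hk' (by omega)
  have hq1 : (s - 1) - 1 = s - 2 := by omega
  constructor
  · intro k hk
    have h := main (k + 1) (k + 2) 1 le_rfl (by omega)
    rw [pow_one] at h
    rw [h, Tc_zero]
    rw [hq1]
    rintro ⟨-, hd⟩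
    exact hk (by simpa using hd)
  · intro j
    have h := main (j * (s - 2) + 1) (j * (s - 2) + 2) 1 le_rfl (by omega)
    rw [pow_one] at h
    rw [h]
    have e : j * (s - 2) + 1 = 1 + j * ((s - 1) - 1) := by rw [hq1]; omega
    rw [e, Tc_eval α (s - 1) 1 j hp]
    have e2 : (s - 1) * j + 1 = j * (s - 1) + 1 := by ring
    rw [Fc, e2]
    have hcast : ((s : ℚ) - 1) = ((s - 1 : ℕ) : ℚ) := by
      rw [Nat.cast_sub (by omega)]; norm_num
    congr 1
    rw [hcast]
    push_cast
    ring
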